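/- arXiv:1110.1417 — 6 statements merged into one kernel-verified Lean document; each statement's English description precedes it below -/
import Mathlib

section
/- Let n ≥ 2 and let λ_1 ≥ λ_2 ≥ ⋯ ≥ λ_n be real numbers satisfying ∑_{i=1}^n arctan λ_i ≥ (n−2)π/2. Then λ_1 + (n−1)λ_n ≥ 0. -/
open Real

lemma my_arctan_add_le {x y : ℝ} (hx : 0 ≤ x) (hy : 0 ≤ y) :
    Real.arctan (x + y) ≤ Real.arctan x + Real.arctan y := by
  by_cases h : x * y < 1
  · rw [Real.arctan_add h]
    apply Real.arctan_strictMono.monotone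
    have h1 : 0 < 1 - x * y := by linarith
    rw [le_div_iff₀ h1]
    nlinarith [mul_nonneg hx hy, add_nonneg hx hy]
  · push_neg at h
    have hy0 : 0 < y := by nlinarith
    have hx0 : 0 < x := by nlinarith
    have hxy : y⁻¹ ≤ x := by
      rw [inv_le_iff_one_le_mul₀ hy0]; nlinarith
    have := Real.arctan_strictMono.monotone hxy
    rw [Real.arctan_inv_of_pos hy0] at this
    have := Real.arctan_lt_pi_div_two (x + y)
    linarith

lemma my_arctan_nsmul_le {x : ℝ} (hx : 0 ≤ x) (k : ℕ) :
    Real.arctan ((k : ℝ) * x) ≤ (k : ℝ) * Real.arctan x := by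
  induction k with
  | zero => simp
  | succ k ih =>
    push_cast
    have h1 : ((k : ℝ) + 1) * x = (k : ℝ) * x + x := by ring
    rw [h1]
    have h2 := my_arctan_add_le (x := (k:ℝ) * x) (y := x) (by positivity) hx
    have hax : 0 ≤ Real.arctan x := by
      have := Real.arctan_strictMono.monotone hx
      rwa [Real.arctan_zero] at this
    linarith

/-- For ordered reals `λ_1 ≥ ⋯ ≥ λ_n` with `∑ arctan λ_i ≥ (n-2)π/2`, `n ≥ 2`,
one has `λ_1 + (n-1) λ_n ≥ 0`.  (Indices are zero-based: `lam ⟨0⟩ = λ_1`,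
`lam ⟨n-1⟩ = λ_n`.) -/
theorem ordered_eigen_max_min
    (n : ℕ) (hn : 2 ≤ n) (lam : Fin n → ℝ)
    (hsort : ∀ i j : Fin n, i ≤ j → lam j ≤ lam i)
    (hsum : ((n : ℝ) - 2) * Real.pi / 2 ≤ ∑ i, Real.arctan (lam i)) :
    0 ≤ lam ⟨0, by omega⟩ + ((n : ℝ) - 1) * lam ⟨n - 1, by omega⟩ := by
  set i0 : Fin n := ⟨0, by omega⟩
  set iN : Fin n := ⟨n - 1, by omega⟩
  by_cases hneg : 0 ≤ lam iN
  · have h1 : lam iN ≤ lam i0 := hsort i0 iN (by simp [i0, iN])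
    have : (0:ℝ) ≤ ((n : ℝ) - 1) := by
      have : (2:ℝ) ≤ n := by exact_mod_cast hn
      linarith
    nlinarith
  push_neg at hneg
  -- key sum manipulation
  have hA : ∀ i : Fin n, Real.arctan (lam i) ≤ Real.arctan (lam i0) :=
    fun i => Real.arctan_strictMono.monotone (hsort i0 i (Fin.mk_le_mk.mpr (Nat.zero_le _)))
  set A := Real.arctan (lam i0) with hAdef
  set B := Real.arctan (lam iN) with hBdef
  have hcard : (Finset.univ.erase iN).card = n - 1 := by
    rw [Finset.card_erase_of_mem (Finset.mem_univ _), Finset.card_univ, Fintype.card_fin]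
  have hsplit : ∑ i ∈ Finset.univ.erase iN, Real.arctan (lam i) + B =
      ∑ i, Real.arctan (lam i) := by
    rw [hBdef, Finset.sum_erase_add _ _ (Finset.mem_univ iN)]
  have hbound : ∑ i ∈ Finset.univ.erase iN, Real.arctan (lam i) ≤ ((n : ℝ) - 1) * A := by
    calc ∑ i ∈ Finset.univ.erase iN, Real.arctan (lam i)
        ≤ ∑ _i ∈ Finset.univ.erase iN, A := Finset.sum_le_sum (fun i _ => hA i)
      _ = ((n : ℝ) - 1) * A := by
          rw [Finset.sum_const, hcard, nsmul_eq_mul]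
          congr 1
          have : (1:ℕ) ≤ n := by omega
          push_cast [Nat.cast_sub this]
          ring
  have hkey : ((n : ℝ) - 1) * ((Real.pi) / 2 - A) ≤ Real.pi / 2 + B := by
    have := hsum
    rw [← hsplit] at this
    have hn2 : (2:ℝ) ≤ n := by exact_mod_cast hn
    nlinarith [Real.arctan_lt_pi_div_two (lam i0)]
  have hB0 : B < 0 := by
    rw [hBdef]
    simpa using Real.arctan_strictMono hneg
  have hApos : 0 < A := by
    have h1 : A < Real.pi / 2 := Real.arctan_lt_pi_div_two _
    have hn2 : (2:ℝ) ≤ n := by exact_mod_cast hn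
    nlinarith
  have hl1 : 0 < lam i0 := by
    by_contra h
    push_neg at h
    have := Real.arctan_strictMono.monotone h
    rw [Real.arctan_zero] at this
    rw [← hAdef] at this
    linarith
  set μ : ℝ := -lam iN with hμdef
  have hμ : 0 < μ := by simp [hμdef]; linarith
  -- rewrite in terms of inverses
  have e1 : Real.arctan (lam i0)⁻¹ = Real.pi / 2 - A := Real.arctan_inv_of_pos hl1
  have e2 : Real.arctan μ⁻¹ = Real.pi / 2 + B := by
    rw [Real.arctan_inv_of_pos hμ, hμdef, Real.arctan_neg, hBdef]
    ring
  have hfinal : Real.arctan (((n:ℝ) - 1) * (lam i0)⁻¹) ≤ Real.arctan μ⁻¹ := by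
    have hcast : ((n:ℝ) - 1) = ((n - 1 : ℕ) : ℝ) := by
      have : (1:ℕ) ≤ n := by omega
      push_cast [Nat.cast_sub this]; ring
    calc Real.arctan (((n:ℝ) - 1) * (lam i0)⁻¹)
        ≤ ((n:ℝ) - 1) * Real.arctan (lam i0)⁻¹ := by
          rw [hcast]; exact my_arctan_nsmul_le (by positivity) (n - 1)
      _ ≤ Real.arctan μ⁻¹ := by rw [e1, e2]; linarith
  have hle : ((n:ℝ) - 1) * (lam i0)⁻¹ ≤ μ⁻¹ :=
    Real.arctan_strictMono.le_iff_le.mp hfinal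
  have hn2 : (2:ℝ) ≤ n := by exact_mod_cast hn
  have : ((n:ℝ) - 1) * μ ≤ lam i0 := by
    calc ((n:ℝ) - 1) * μ = (lam i0 * μ) * (((n:ℝ) - 1) * (lam i0)⁻¹) := by
          field_simp
      _ ≤ (lam i0 * μ) * μ⁻¹ := mul_le_mul_of_nonneg_left hle (mul_pos hl1 hμ).le
      _ = lam i0 := by field_simp
  rw [hμdef] at this
  linarith
end

section
/- Let n ≥ 2 and let λ_1 ≥ λ_2 ≥ ⋯ ≥ λ_n be real numbers satisfying ∑_{i=1}^n arctan λ_i ≥ (n−2)π/2. Then σ_k(λ_1,…,λ_n) ≥ 0 for every k with 1 ≤ k ≤ n−1. -/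
open Real

lemma not_odd_mul {x : ℝ} (hx1 : -(π/2) < x) (hx2 : x < π/2) :
    ∀ k : ℤ, x ≠ (2*(k:ℝ)+1)*π/2 := by
  intro k h
  have hpi := pi_pos
  rcases le_or_gt 0 k with hk | hk
  · have : (1:ℝ) ≤ 2*(k:ℝ)+1 := by
      have : (0:ℝ) ≤ (k:ℝ) := by exact_mod_cast hk
      linarith
    nlinarith
  · have hk1 : (k:ℝ) ≤ -1 := by exact_mod_cast (by omega : k ≤ -1)
    nlinarith

lemma tan_add_le {a b : ℝ} (ha : 0 ≤ a) (hb : 0 ≤ b) (hab : a + b < π/2) :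
    Real.tan a + Real.tan b ≤ Real.tan (a+b) := by
  have hpi := pi_pos
  have h1 : a < π/2 := by linarith
  have h2 : b < π/2 := by linarith
  have hta : 0 ≤ tan a := tan_nonneg_of_nonneg_of_le_pi_div_two ha h1.le
  have htb : 0 ≤ tan b := tan_nonneg_of_nonneg_of_le_pi_div_two hb h2.le
  have hP : tan a * tan b < 1 := by
    rcases eq_or_lt_of_le hb with hb0 | hb0
    · rw [← hb0]; simp
    · have h3 : tan a < tan (π/2 - b) := by
        apply strictMonoOn_tan ⟨by linarith, h1⟩ ⟨by linarith, by linarith⟩ (by linarith)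
      rw [tan_pi_div_two_sub] at h3
      have htb' : 0 < tan b := tan_pos_of_pos_of_lt_pi_div_two hb0 h2
      have := mul_lt_mul_of_pos_right h3 htb'
      rwa [inv_mul_cancel₀ (ne_of_gt htb')] at this
  rw [Real.tan_add' ⟨not_odd_mul (by linarith) h1, not_odd_mul (by linarith) h2⟩]
  have hden : 0 < 1 - tan a * tan b := by linarith
  rw [le_div_iff₀ hden]
  nlinarith [mul_nonneg (add_nonneg hta htb) (mul_nonneg hta htb)]

lemma sum_tan_le {ι : Type*} [DecidableEq ι] (s : Finset ι) (φ : ι → ℝ)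
    (h0 : ∀ i ∈ s, 0 ≤ φ i) (hs : ∑ i ∈ s, φ i < π/2) :
    ∑ i ∈ s, Real.tan (φ i) ≤ Real.tan (∑ i ∈ s, φ i) := by
  induction s using Finset.induction_on with
  | empty => simp
  | @insert a s' ha ih =>
    rw [Finset.sum_insert ha] at hs ⊢
    rw [Finset.sum_insert ha]
    have hφa : 0 ≤ φ a := h0 a (Finset.mem_insert_self a s')
    have h0s : ∀ i ∈ s', 0 ≤ φ i := fun i hi => h0 i (Finset.mem_insert_of_mem hi)
    have hnn : 0 ≤ ∑ i ∈ s', φ i := Finset.sum_nonneg h0s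
    have ihe := ih h0s (by linarith)
    have := tan_add_le hφa hnn hs
    linarith

lemma double_count {ι : Type*} [DecidableEq ι] (s : Finset ι) (f : ι → ℝ) (k : ℕ) (hk : 1 ≤ k) :
    ∑ S ∈ Finset.powersetCard k s, ∑ j ∈ S, ∏ i ∈ S.erase j, f i
      = ∑ T ∈ Finset.powersetCard (k-1) s, ∑ j ∈ s \ T, ∏ i ∈ T, f i := by
  rw [Finset.sum_sigma', Finset.sum_sigma']
  refine Finset.sum_bij' (fun p _ => ⟨p.1.erase p.2, p.2⟩)
    (fun p _ => ⟨insert p.2 p.1, p.2⟩) ?_ ?_ ?_ ?_ ?_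
  · rintro ⟨S, j⟩ hp
    rw [Finset.mem_sigma] at hp ⊢
    obtain ⟨hS, hj⟩ := hp
    rw [Finset.mem_powersetCard] at hS
    constructor
    · rw [Finset.mem_powersetCard]
      exact ⟨(Finset.erase_subset _ _).trans hS.1, by rw [Finset.card_erase_of_mem hj, hS.2]⟩
    · simp only [Finset.mem_sdiff]
      exact ⟨hS.1 hj, Finset.notMem_erase _ _⟩
  · rintro ⟨T, j⟩ hp
    rw [Finset.mem_sigma] at hp ⊢
    obtain ⟨hT, hj⟩ := hp
    rw [Finset.mem_powersetCard] at hT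
    rw [Finset.mem_sdiff] at hj
    constructor
    · rw [Finset.mem_powersetCard]
      refine ⟨Finset.insert_subset hj.1 hT.1, ?_⟩
      rw [Finset.card_insert_of_notMem hj.2, hT.2]
      omega
    · exact Finset.mem_insert_self _ _
  · rintro ⟨S, j⟩ hp
    rw [Finset.mem_sigma] at hp
    simp only [Sigma.mk.inj_iff, heq_eq_eq, and_true]
    exact Finset.insert_erase hp.2
  · rintro ⟨T, j⟩ hp
    rw [Finset.mem_sigma, Finset.mem_sdiff] at hp
    simp only [Sigma.mk.inj_iff, heq_eq_eq, and_true]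
    exact Finset.erase_insert hp.2.2
  · rintro ⟨S, j⟩ _
    rfl

/-- The `k`-th elementary symmetric polynomial of `λ_1, …, λ_n`. -/
noncomputable def esymm (n k : ℕ) (lam : Fin n → ℝ) : ℝ :=
  ∑ s ∈ Finset.powersetCard k (Finset.univ : Finset (Fin n)), ∏ i ∈ s, lam i

lemma esymm_split (n : ℕ) (k : ℕ) (hk : 1 ≤ k) (lam : Fin n → ℝ) (i₀ : Fin n) :
    esymm n k lam = (∑ S ∈ Finset.powersetCard k (Finset.univ.erase i₀), ∏ i ∈ S, lam i)
      + lam i₀ * ∑ T ∈ Finset.powersetCard (k-1) (Finset.univ.erase i₀), ∏ i ∈ T, lam i := by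
  obtain ⟨k', rfl⟩ : ∃ k', k = k' + 1 := ⟨k - 1, by omega⟩
  have he : (Finset.univ : Finset (Fin n)) = insert i₀ (Finset.univ.erase i₀) :=
    (Finset.insert_erase (Finset.mem_univ i₀)).symm
  have hni : i₀ ∉ Finset.univ.erase i₀ := Finset.notMem_erase _ _
  unfold esymm
  rw [he, Finset.powersetCard_succ_insert hni]
  have hdisj : Disjoint (Finset.powersetCard (k'+1) (Finset.univ.erase i₀))
      ((Finset.powersetCard k' (Finset.univ.erase i₀)).image (insert i₀)) := by
    rw [Finset.disjoint_left]
    intro S hS hS'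
    rw [Finset.mem_powersetCard] at hS
    obtain ⟨T, hT, rfl⟩ := Finset.mem_image.1 hS'
    exact hni (hS.1 (Finset.mem_insert_self _ _))
  rw [Finset.sum_union hdisj]
  have hinj : ∑ S ∈ (Finset.powersetCard k' (Finset.univ.erase i₀)).image (insert i₀),
      ∏ i ∈ S, lam i = ∑ T ∈ Finset.powersetCard k' (Finset.univ.erase i₀), lam i₀ * ∏ i ∈ T, lam i := by
    rw [Finset.sum_image]
    · apply Finset.sum_congr rfl
      intro T hT
      rw [Finset.mem_powersetCard] at hT
      exact Finset.prod_insert (fun h => hni (hT.1 h))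
    · intro x hx y hy hxy
      rw [Finset.mem_coe, Finset.mem_powersetCard] at hx hy
      have hx0 : i₀ ∉ x := fun h => hni (hx.1 h)
      have hy0 : i₀ ∉ y := fun h => hni (hy.1 h)
      rw [← Finset.erase_insert hx0, ← Finset.erase_insert hy0, hxy]
  rw [hinj, ← Finset.mul_sum]
  simp

/-- For ordered reals `λ_1 ≥ ⋯ ≥ λ_n` with `∑ arctan λ_i ≥ (n-2)π/2`, `n ≥ 2`,
all elementary symmetric functions `σ_k(λ)` with `1 ≤ k ≤ n-1` are nonnegative. -/
theorem ordered_eigen_sigma_nonneg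
    (n : ℕ) (hn : 2 ≤ n) (lam : Fin n → ℝ)
    (hsort : ∀ i j : Fin n, i ≤ j → lam j ≤ lam i)
    (hsum : ((n : ℝ) - 2) * Real.pi / 2 ≤ ∑ i, Real.arctan (lam i)) :
    ∀ k : ℕ, 1 ≤ k → k ≤ n - 1 → 0 ≤ esymm n k lam := by
  intro k hk1 hk2
  have hpi := pi_pos
  set i₀ : Fin n := ⟨n - 1, by omega⟩ with hi₀
  by_cases hneg : 0 ≤ lam i₀
  · -- all entries nonnegative
    have hall : ∀ i : Fin n, 0 ≤ lam i := by
      intro i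
      refine le_trans hneg (hsort i i₀ ?_)
      rw [Fin.le_def]
      have := i.2
      simp only [hi₀]
      omega
    unfold esymm
    exact Finset.sum_nonneg fun S _ => Finset.prod_nonneg fun i _ => hall i
  · push_neg at hneg
    set s : Finset (Fin n) := Finset.univ.erase i₀ with hs
    have hcards : s.card = n - 1 := by
      rw [hs, Finset.card_erase_of_mem (Finset.mem_univ _), Finset.card_univ, Fintype.card_fin]
    set c : ℝ := -lam i₀ with hc
    have hc0 : 0 < c := by simp only [hc]; linarith
    set t : ℝ := arctan c with ht
    have ht0 : 0 < t := by
      rw [ht, ← Real.arctan_zero]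
      exact Real.arctan_strictMono hc0
    have htpi : t < π/2 := Real.arctan_lt_pi_div_two c
    have hti : t = - Real.arctan (lam i₀) := by rw [ht, hc, Real.arctan_neg]
    have hsplit : ∑ i, Real.arctan (lam i)
        = Real.arctan (lam i₀) + ∑ j ∈ s, Real.arctan (lam j) :=
      (Finset.add_sum_erase _ _ (Finset.mem_univ i₀)).symm
    have hsums : ((n:ℝ) - 2) * π/2 + t ≤ ∑ j ∈ s, Real.arctan (lam j) := by
      rw [hti]
      have := hsum
      rw [hsplit] at this
      linarith
    have hcast2 : ((n - 2 : ℕ) : ℝ) = (n:ℝ) - 2 := by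
      rw [Nat.cast_sub hn]; norm_num
    have hcast1 : ((n - 1 : ℕ) : ℝ) = (n:ℝ) - 1 := by
      rw [Nat.cast_sub (by omega : 1 ≤ n)]; norm_num
    -- each other entry is at least c
    have hge : ∀ j ∈ s, c ≤ lam j := by
      intro j hj
      have hrest : ∑ i ∈ s.erase j, Real.arctan (lam i) ≤ ((s.erase j).card) • (π/2) :=
        Finset.sum_le_card_nsmul _ _ _ (fun i _ => (Real.arctan_lt_pi_div_two _).le)
      have hcard : (s.erase j).card = n - 2 := by
        rw [Finset.card_erase_of_mem hj, hcards]
        omega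
      rw [hcard, nsmul_eq_mul, hcast2] at hrest
      have hsj : ∑ j' ∈ s, Real.arctan (lam j')
          = Real.arctan (lam j) + ∑ i ∈ s.erase j, Real.arctan (lam i) :=
        (Finset.add_sum_erase _ _ hj).symm
      have hlow : t ≤ Real.arctan (lam j) := by
        rw [hsj] at hsums
        linarith
      rw [ht] at hlow
      exact Real.arctan_strictMono.le_iff_le.1 hlow
    have hpos : ∀ j ∈ s, 0 < lam j := fun j hj => lt_of_lt_of_le hc0 (hge j hj)
    -- the tangent superadditivity bound : sum of reciprocals
    set φ : Fin n → ℝ := fun j => π/2 - Real.arctan (lam j) with hφ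
    have hφ0 : ∀ j ∈ s, 0 ≤ φ j := by
      intro j _
      simp only [hφ]
      linarith [Real.arctan_lt_pi_div_two (lam j)]
    have hφsum : ∑ j ∈ s, φ j ≤ π/2 - t := by
      have h1 : ∑ j ∈ s, φ j = (s.card : ℝ) * (π/2) - ∑ j ∈ s, Real.arctan (lam j) := by
        simp only [hφ]
        rw [Finset.sum_sub_distrib, Finset.sum_const, nsmul_eq_mul]
      rw [h1, hcards, hcast1]
      linarith
    have hφlt : ∑ j ∈ s, φ j < π/2 := by linarith
    have hsuminv : ∑ j ∈ s, (lam j)⁻¹ ≤ c⁻¹ := by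
      have h1 : ∑ j ∈ s, Real.tan (φ j) = ∑ j ∈ s, (lam j)⁻¹ := by
        apply Finset.sum_congr rfl
        intro j _
        simp only [hφ]
        rw [Real.tan_pi_div_two_sub, Real.tan_arctan]
      have h2 : Real.tan (∑ j ∈ s, φ j) ≤ Real.tan (π/2 - t) := by
        rcases eq_or_lt_of_le hφsum with h | h
        · rw [h]
        · apply le_of_lt
          apply Real.strictMonoOn_tan ⟨?_, hφlt⟩ ⟨by linarith, by linarith⟩ h
          have := Finset.sum_nonneg hφ0
          linarith
      have h3 : Real.tan (π/2 - t) = c⁻¹ := by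
        rw [Real.tan_pi_div_two_sub, ht, Real.tan_arctan]
      calc ∑ j ∈ s, (lam j)⁻¹ = ∑ j ∈ s, Real.tan (φ j) := h1.symm
        _ ≤ Real.tan (∑ j ∈ s, φ j) := sum_tan_le s φ hφ0 hφlt
        _ ≤ Real.tan (π/2 - t) := h2
        _ = c⁻¹ := h3
    -- elementary symmetric polynomials of the positive part
    set e : ℕ → ℝ := fun m => ∑ S ∈ Finset.powersetCard m s, ∏ i ∈ S, lam i with hE
    have he_nonneg : ∀ m, 0 ≤ e m := by
      intro m
      apply Finset.sum_nonneg
      intro S hS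
      rw [Finset.mem_powersetCard] at hS
      exact Finset.prod_nonneg fun i hi => (hpos i (hS.1 hi)).le
    -- key chain
    have key1 : e (k-1) ≤ e k * ∑ j ∈ s, (lam j)⁻¹ := by
      have step1 : ∑ S ∈ Finset.powersetCard k s, ∑ j ∈ S, ∏ i ∈ S.erase j, lam i
          = ∑ T ∈ Finset.powersetCard (k-1) s, ∑ j ∈ s \ T, ∏ i ∈ T, lam i :=
        double_count s lam k hk1
      have step2 : e (k-1) ≤ ∑ T ∈ Finset.powersetCard (k-1) s, ∑ j ∈ s \ T, ∏ i ∈ T, lam i := by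
        rw [hE]
        apply Finset.sum_le_sum
        intro T hT
        rw [Finset.mem_powersetCard] at hT
        have hprod : 0 ≤ ∏ i ∈ T, lam i := Finset.prod_nonneg fun i hi => (hpos i (hT.1 hi)).le
        rw [Finset.sum_const, nsmul_eq_mul]
        have hcardT : 1 ≤ (s \ T).card := by
          rw [Finset.card_sdiff_of_subset hT.1, hcards, hT.2]
          omega
        have : (1:ℝ) ≤ ((s \ T).card : ℝ) := by exact_mod_cast hcardT
        nlinarith
      have step3 : ∑ S ∈ Finset.powersetCard k s, ∑ j ∈ S, ∏ i ∈ S.erase j, lam i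
          ≤ e k * ∑ j ∈ s, (lam j)⁻¹ := by
        have hrw : e k * ∑ j ∈ s, (lam j)⁻¹
            = ∑ S ∈ Finset.powersetCard k s, ∑ j ∈ s, (∏ i ∈ S, lam i) * (lam j)⁻¹ := by
          rw [hE, Finset.sum_mul]
          exact Finset.sum_congr rfl fun S _ => Finset.mul_sum _ _ _
        rw [hrw]
        apply Finset.sum_le_sum
        intro S hS
        rw [Finset.mem_powersetCard] at hS
        have hterm : ∀ j ∈ S, ∏ i ∈ S.erase j, lam i = (∏ i ∈ S, lam i) * (lam j)⁻¹ := by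
          intro j hj
          have hlamj : lam j ≠ 0 := (hpos j (hS.1 hj)).ne'
          rw [← Finset.mul_prod_erase S lam hj]
          field_simp
        rw [Finset.sum_congr rfl hterm]
        apply Finset.sum_le_sum_of_subset_of_nonneg hS.1
        intro j hj _
        have hprod : 0 ≤ ∏ i ∈ S, lam i := Finset.prod_nonneg fun i hi => (hpos i (hS.1 hi)).le
        exact mul_nonneg hprod (inv_nonneg.2 (hpos j hj).le)
      calc e (k-1) ≤ ∑ T ∈ Finset.powersetCard (k-1) s, ∑ j ∈ s \ T, ∏ i ∈ T, lam i := step2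
        _ = ∑ S ∈ Finset.powersetCard k s, ∑ j ∈ S, ∏ i ∈ S.erase j, lam i := step1.symm
        _ ≤ e k * ∑ j ∈ s, (lam j)⁻¹ := step3
    have key2 : c * e (k-1) ≤ e k := by
      have h1 : e k * ∑ j ∈ s, (lam j)⁻¹ ≤ e k * c⁻¹ :=
        mul_le_mul_of_nonneg_left hsuminv (he_nonneg k)
      have h2 : e (k-1) ≤ e k * c⁻¹ := le_trans key1 h1
      have h3 := mul_le_mul_of_nonneg_left h2 hc0.le
      rwa [mul_comm (e k) c⁻¹, ← mul_assoc, mul_inv_cancel₀ hc0.ne', one_mul] at h3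
    rw [esymm_split n k hk1 lam i₀]
    have : lam i₀ = -c := by rw [hc]; ring
    rw [this]
    have hEk : e k = ∑ S ∈ Finset.powersetCard k (Finset.univ.erase i₀), ∏ i ∈ S, lam i := rfl
    have hEk1 : e (k-1) = ∑ T ∈ Finset.powersetCard (k-1) (Finset.univ.erase i₀), ∏ i ∈ T, lam i := rfl
    rw [← hEk, ← hEk1]
    linarith [key2]
end

section
/- Let λ_1,…,λ_n be real numbers and Θ a real number with ∑_{j=1}^n arctan λ_j = Θ. Then for each index i, (1/(1+λ_i²)) · ∏_{j=1}^n √(1+λ_j²) = cos Θ · ∑_{0≤2k≤n−1} (−1)^k σ_{2k}(λ̂_i) − sin Θ · ∑_{1≤2k−1≤n−1} (−1)^k σ_{2k−1}(λ̂_i), where σ_m(λ̂_i) denotes the m-th elementary symmetric polynomial of the n−1 numbers λ_1,…,λ_{i−1},λ_{i+1},…,λ_n (the conformality identity (1/(1+λ_1²),…,1/(1+λ_n²))·V = (∂Σ/∂λ_1,…,∂Σ/∂λ_n) with V = ∏_j √(1+λ_j²) and Σ = cos Θ ∑(−1)^k σ_{2k+1} − sin Θ ∑(−1)^k σ_{2k}).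 -/
open Real

/-- The `m`-th elementary symmetric polynomial of the `n-1` numbers obtained from
`λ_1, …, λ_n` by deleting `λ_i` (so `esymmDel n 0 lam i = 1`, and it vanishes for
`m > n - 1`). -/
noncomputable def esymmDel (n m : ℕ) (lam : Fin n → ℝ) (i : Fin n) : ℝ :=
  ∑ s ∈ Finset.powersetCard m ((Finset.univ : Finset (Fin n)).erase i), ∏ j ∈ s, lam j

lemma aux_one_add_mul_I (x : ℝ) :
    (1 : ℂ) + x * Complex.I = (Real.sqrt (1 + x ^ 2) : ℝ) * Complex.exp (Real.arctan x * Complex.I) := by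
  have h0 : (0:ℝ) < 1 + x ^ 2 := by positivity
  have hs : Real.sqrt (1 + x ^ 2) ≠ 0 := by positivity
  rw [Complex.exp_mul_I]
  have hc : (Complex.cos (Real.arctan x)) = ((1 / Real.sqrt (1 + x ^ 2) : ℝ) : ℂ) := by
    rw [← Complex.ofReal_cos, Real.cos_arctan]
  have hsin : (Complex.sin (Real.arctan x)) = ((x / Real.sqrt (1 + x ^ 2) : ℝ) : ℂ) := by
    rw [← Complex.ofReal_sin, Real.sin_arctan]
  have h1 : Real.sqrt (1 + x ^ 2) * (1 / Real.sqrt (1 + x ^ 2)) = 1 := by field_simp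
  have h2 : Real.sqrt (1 + x ^ 2) * (x / Real.sqrt (1 + x ^ 2)) = x := by field_simp
  rw [hc, hsin, mul_add, ← mul_assoc, ← Complex.ofReal_mul, ← Complex.ofReal_mul, h1, h2]
  norm_num

lemma aux_prod_exp {n : ℕ} (lam : Fin n → ℝ) (s : Finset (Fin n)) :
    ∏ j ∈ s, ((1 : ℂ) + lam j * Complex.I) =
      ((∏ j ∈ s, Real.sqrt (1 + lam j ^ 2) : ℝ) : ℂ) *
        Complex.exp ((∑ j ∈ s, Real.arctan (lam j) : ℝ) * Complex.I) := by
  rw [Complex.ofReal_prod, Complex.ofReal_sum, Finset.sum_mul, Complex.exp_sum, ← Finset.prod_mul_distrib]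
  exact Finset.prod_congr rfl fun j _ => aux_one_add_mul_I (lam j)

lemma aux_sum_I_pow (N : ℕ) (c : ℕ → ℝ) :
    ∑ m ∈ Finset.range (2 * N), Complex.I ^ m * (c m : ℂ) =
      ((∑ k ∈ Finset.range N, (-1 : ℝ) ^ k * c (2 * k) : ℝ) : ℂ) +
        ((∑ k ∈ Finset.range N, (-1 : ℝ) ^ k * c (2 * k + 1) : ℝ) : ℂ) * Complex.I := by
  induction N with
  | zero => simp
  | succ N ih =>
    have h2 : 2 * (N + 1) = (2 * N + 1) + 1 := by ring
    rw [h2, Finset.sum_range_succ, Finset.sum_range_succ, ih,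
      Finset.sum_range_succ, Finset.sum_range_succ]
    have hI2 : Complex.I ^ (2 * N) = ((-1 : ℝ) ^ N : ℂ) := by
      rw [pow_mul, Complex.I_sq]; push_cast; ring
    have hI3 : Complex.I ^ (2 * N + 1) = ((-1 : ℝ) ^ N : ℂ) * Complex.I := by
      rw [pow_succ, hI2]
    rw [hI2, hI3]
    push_cast
    ring

lemma aux_prod_esymm {n : ℕ} (lam : Fin n → ℝ) (i : Fin n) :
    ∏ j ∈ (Finset.univ : Finset (Fin n)).erase i, ((1 : ℂ) + lam j * Complex.I) =
      ∑ m ∈ Finset.range (2 * (n + 1)), Complex.I ^ m * ((esymmDel n m lam i : ℝ) : ℂ) := by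
  set S := (Finset.univ : Finset (Fin n)).erase i with hS
  have h1 : ∏ j ∈ S, ((1 : ℂ) + lam j * Complex.I)
      = ∑ t ∈ S.powerset, (∏ j ∈ t, ((lam j : ℂ) * Complex.I)) * ∏ j ∈ S \ t, (1 : ℂ) := by
    have := Finset.prod_add (fun j => (lam j : ℂ) * Complex.I) (fun _ => (1 : ℂ)) S
    simpa [add_comm] using this
  rw [h1]
  have h2 : ∀ t ∈ S.powerset, (∏ j ∈ t, ((lam j : ℂ) * Complex.I)) * ∏ j ∈ S \ t, (1 : ℂ)
      = Complex.I ^ t.card * ((∏ j ∈ t, lam j : ℝ) : ℂ) := by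
    intro t _
    rw [Finset.prod_mul_distrib, Finset.prod_const, Finset.prod_const_one]
    push_cast
    ring
  rw [Finset.sum_congr rfl h2, Finset.sum_powerset]
  have h3 : ∀ m : ℕ, (∑ t ∈ Finset.powersetCard m S, Complex.I ^ t.card * ((∏ j ∈ t, lam j : ℝ) : ℂ))
      = Complex.I ^ m * ((esymmDel n m lam i : ℝ) : ℂ) := by
    intro m
    rw [esymmDel]
    push_cast
    rw [Finset.mul_sum]
    refine Finset.sum_congr rfl fun t ht => ?_
    rw [(Finset.mem_powersetCard.mp ht).2]
  rw [Finset.sum_congr rfl fun m _ => h3 m]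
  refine Finset.sum_subset ?_ ?_
  · intro m hm
    simp only [Finset.mem_range] at hm ⊢
    have : S.card ≤ n := by
      calc S.card ≤ (Finset.univ : Finset (Fin n)).card := Finset.card_le_card (Finset.erase_subset _ _)
      _ = n := by simp
    omega
  · intro m _ hm
    simp only [Finset.mem_range, not_lt] at hm
    have hc : S.card ≤ n := by
      calc S.card ≤ (Finset.univ : Finset (Fin n)).card := Finset.card_le_card (Finset.erase_subset _ _)
      _ = n := by simp
    have : Finset.powersetCard m S = ∅ := Finset.powersetCard_eq_empty.mpr (by omega)
    rw [esymmDel, ← hS, this]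
    simp

/-- The conformality identity: if `∑ arctan λ_j = Θ`, then for each `i`,
`(1/(1+λ_i²)) ∏_j √(1+λ_j²)
  = cos Θ ∑_{0 ≤ 2k ≤ n-1} (-1)^k σ_{2k}(λ̂_i) - sin Θ ∑_{1 ≤ 2k-1 ≤ n-1} (-1)^k σ_{2k-1}(λ̂_i)`.
(The first sum is written over `k ∈ range (n+1)` and the second over `k ∈ Icc 1 n`:
the extra terms vanish since `σ_m(λ̂_i) = 0` for `m > n - 1`.) -/
theorem conformality_identity
    (n : ℕ) (lam : Fin n → ℝ) (Θ : ℝ)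
    (hsum : ∑ j, Real.arctan (lam j) = Θ) :
    ∀ i : Fin n,
      (1 / (1 + lam i ^ 2)) * ∏ j, Real.sqrt (1 + lam j ^ 2) =
        Real.cos Θ *
            (∑ k ∈ Finset.range (n + 1), (-1 : ℝ) ^ k * esymmDel n (2 * k) lam i) -
          Real.sin Θ *
            (∑ k ∈ Finset.Icc 1 n, (-1 : ℝ) ^ k * esymmDel n (2 * k - 1) lam i) := by
  intro i
  set S := (Finset.univ : Finset (Fin n)).erase i with hS
  set φ := ∑ j ∈ S, Real.arctan (lam j) with hφ
  set P := ∏ j ∈ S, Real.sqrt (1 + lam j ^ 2) with hP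
  -- main complex identity
  have key : ((P : ℝ) : ℂ) * Complex.exp ((φ : ℝ) * Complex.I) =
      ∑ m ∈ Finset.range (2 * (n + 1)), Complex.I ^ m * ((esymmDel n m lam i : ℝ) : ℂ) := by
    rw [← aux_prod_exp lam S, aux_prod_esymm lam i]
  rw [aux_sum_I_pow (n+1) (fun m => esymmDel n m lam i)] at key
  have hexp : Complex.exp ((φ : ℝ) * Complex.I)
      = ((Real.cos φ : ℝ) : ℂ) + ((Real.sin φ : ℝ) : ℂ) * Complex.I := by
    rw [Complex.exp_mul_I, ← Complex.ofReal_cos, ← Complex.ofReal_sin]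
  rw [hexp] at key
  set E := ∑ k ∈ Finset.range (n + 1), (-1 : ℝ) ^ k * esymmDel n (2 * k) lam i with hE
  set O := ∑ k ∈ Finset.range (n + 1), (-1 : ℝ) ^ k * esymmDel n (2 * k + 1) lam i with hO
  have hre : P * Real.cos φ = E := by
    have := congrArg Complex.re key
    simpa [Complex.cos_ofReal_re, Complex.sin_ofReal_re] using this
  have him : P * Real.sin φ = O := by
    have := congrArg Complex.im key
    simpa [Complex.cos_ofReal_re, Complex.sin_ofReal_re] using this
  -- relate second sum to O
  have hSn : S.card ≤ n := by
    calc S.card ≤ (Finset.univ : Finset (Fin n)).card := Finset.card_le_card (Finset.erase_subset _ _)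
    _ = n := by simp
  have hvanish : esymmDel n (2 * n + 1) lam i = 0 := by
    rw [esymmDel]
    have : Finset.powersetCard (2 * n + 1) ((Finset.univ : Finset (Fin n)).erase i) = ∅ := by
      apply Finset.powersetCard_eq_empty.mpr
      rw [← hS]; omega
    rw [this]; simp
  have hIcc : ∑ k ∈ Finset.Icc 1 n, (-1 : ℝ) ^ k * esymmDel n (2 * k - 1) lam i = -O := by
    have h1 : Finset.Icc 1 n = Finset.Ico 1 (n + 1) := by
      rw [Finset.Ico_add_one_right_eq_Icc]
    rw [h1, Finset.sum_Ico_eq_sum_range]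
    simp only [Nat.add_sub_cancel]
    rw [hO, Finset.sum_range_succ, hvanish, mul_zero, add_zero, ← Finset.sum_neg_distrib]
    refine Finset.sum_congr rfl fun k _ => ?_
    have h2 : 2 * (1 + k) - 1 = 2 * k + 1 := by omega
    rw [h2, pow_add]
    ring
  rw [hIcc]
  -- angles
  have hθ : Θ = Real.arctan (lam i) + φ := by
    rw [← hsum, hφ, hS, ← Finset.sum_erase_add Finset.univ _ (Finset.mem_univ i)]
    ring
  -- LHS
  have hprod : ∏ j, Real.sqrt (1 + lam j ^ 2) = Real.sqrt (1 + lam i ^ 2) * P := by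
    rw [hP, hS, ← Finset.prod_erase_mul Finset.univ _ (Finset.mem_univ i)]
    ring
  have h0 : (0:ℝ) < 1 + lam i ^ 2 := by positivity
  have hsq : Real.sqrt (1 + lam i ^ 2) ^ 2 = 1 + lam i ^ 2 := Real.sq_sqrt h0.le
  have hspos : (0:ℝ) < Real.sqrt (1 + lam i ^ 2) := Real.sqrt_pos.mpr h0
  rw [hprod]
  rw [← hre]
  rw [← him]
  rw [hθ, Real.cos_add, Real.sin_add, Real.cos_arctan, Real.sin_arctan]
  have hsne : Real.sqrt (1 + lam i ^ 2) ≠ 0 := ne_of_gt hspos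
  field_simp
  linear_combination P * hsq - P * (1 + lam i ^ 2) * Real.sin_sq_add_cos_sq φ
end

section
/- Let n ≥ 2 and let λ_1,…,λ_n be real numbers with ∑_{i=1}^n arctan λ_i = (n−2)π/2. Then ∑_{i=1}^n (1/(1+λ_i²)) · ∏_{j=1}^n √(1+λ_j²) = 2σ_{n−2} − 4σ_{n−4} + 6σ_{n−6} − ⋯ = ∑_{j≥1, n−2j≥0} (−1)^{j−1} · 2j · σ_{n−2j}(λ_1,…,λ_n). -/
open Real

section Aux

open Complex Polynomial Finset

lemma negpow (a b : ℕ) (h : a % 2 = b % 2) : ((-1:ℝ))^a = (-1)^b := by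
  conv_lhs => rw [← Nat.div_add_mod a 2]
  conv_rhs => rw [← Nat.div_add_mod b 2]
  rw [h, pow_add, pow_add, pow_mul, pow_mul]
  norm_num

lemma I_pow_two_mul (m : ℕ) : (Complex.I)^(2*m) = ((((-1)^m : ℝ)) : ℂ) := by
  rw [pow_mul, Complex.I_sq]; push_cast; ring

lemma I_pow_odd_re (m : ℕ) : ((Complex.I)^(2*m+1)).re = 0 := by
  rw [pow_succ, I_pow_two_mul, Complex.re_ofReal_mul, Complex.I_re, mul_zero]

/-- The key real index-juggling identity. -/
lemma key_sum (n : ℕ) (hn : 2 ≤ n) (σ : ℕ → ℝ) :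
    ∑ k ∈ range (n+1), ((-Complex.I)^(n-2) * Complex.I^k).re * (((n-k : ℕ):ℝ) * σ k) =
      ∑ j ∈ Finset.Icc 1 (n/2), (-1:ℝ)^(j-1) * (2*(j:ℝ)) * σ (n-2*j) := by
  have hre0 : ∀ k, (n + k) % 2 = 1 → ((-Complex.I)^(n-2) * Complex.I^k).re = 0 := by
    intro k hk
    obtain ⟨m, hm⟩ : ∃ m, n - 2 + k = 2*m+1 := ⟨(n-2+k)/2, by omega⟩
    rw [show (-Complex.I) = ((-1:ℝ):ℂ) * Complex.I by push_cast; ring, mul_pow,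
      mul_assoc, ← pow_add, hm, ← Complex.ofReal_pow, Complex.re_ofReal_mul,
      I_pow_odd_re, mul_zero]
  have hrej : ∀ j ∈ Finset.Icc 1 (n/2),
      ((-Complex.I)^(n-2) * Complex.I^(n-2*j)).re = (-1:ℝ)^(j-1) := by
    intro j hj
    simp only [Finset.mem_Icc] at hj
    rw [show (-Complex.I) = ((-1:ℝ):ℂ) * Complex.I by push_cast; ring, mul_pow,
      mul_assoc, ← pow_add, show (n-2) + (n - 2*j) = 2*(n-j-1) by omega,
      I_pow_two_mul, ← Complex.ofReal_pow, ← Complex.ofReal_mul, Complex.ofReal_re,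
      ← pow_add]
    exact negpow _ _ (by omega)
  have hinj : Set.InjOn (fun j => n - 2*j) (Finset.Icc 1 (n/2)) := by
    intro a ha b hb hab
    simp only [Finset.coe_Icc, Set.mem_Icc] at ha hb
    simp only at hab
    omega
  have himg : ((Finset.Icc 1 (n/2)).image (fun j => n - 2*j)) ⊆ range (n+1) := by
    intro k hk
    simp only [Finset.mem_image, Finset.mem_Icc] at hk
    obtain ⟨j, hj, rfl⟩ := hk
    simp only [Finset.mem_range]
    omega
  have hzero : ∀ k ∈ range (n+1), k ∉ (Finset.Icc 1 (n/2)).image (fun j => n - 2*j) →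
      ((-Complex.I)^(n-2) * Complex.I^k).re * (((n-k : ℕ):ℝ) * σ k) = 0 := by
    intro k hk hk2
    simp only [Finset.mem_range] at hk
    simp only [Finset.mem_image, Finset.mem_Icc, not_exists] at hk2
    push_neg at hk2
    rcases Nat.even_or_odd (n + k) with he | ho
    · by_cases hkn : k = n
      · subst hkn; simp
      · exfalso
        obtain ⟨m, hm⟩ := he
        have h1 : k ≤ n := by omega
        have h2 : n - 2*(m-k) = k := by omega
        exact absurd h2 (hk2 (m-k) ⟨by omega, by omega⟩)
    · obtain ⟨m, hm⟩ := ho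
      rw [hre0 k (by omega), zero_mul]
  rw [← Finset.sum_subset himg hzero, Finset.sum_image (fun a ha b hb hab => by
    simp only [Finset.mem_coe, Finset.mem_Icc] at ha hb; omega)]
  refine Finset.sum_congr rfl fun j hj => ?_
  have hj' := Finset.mem_Icc.mp hj
  rw [hrej j hj, show n - (n - 2*j) = 2*j by omega]
  push_cast
  ring

end Aux

/-- Trace of the conformality identity at the critical phase: if
`∑ arctan λ_i = (n-2)π/2`, `n ≥ 2`, then
`∑_i (1/(1+λ_i²)) ∏_j √(1+λ_j²) = 2σ_{n-2} - 4σ_{n-4} + 6σ_{n-6} - ⋯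
  = ∑_{j ≥ 1, n-2j ≥ 0} (-1)^{j-1} 2j σ_{n-2j}`. -/
theorem conformality_trace_critical
    (n : ℕ) (hn : 2 ≤ n) (lam : Fin n → ℝ)
    (hsum : ∑ i, Real.arctan (lam i) = ((n : ℝ) - 2) * Real.pi / 2) :
    ∑ i, (1 / (1 + lam i ^ 2)) * ∏ j, Real.sqrt (1 + lam j ^ 2) =
      ∑ j ∈ Finset.Icc 1 (n / 2),
        (-1 : ℝ) ^ (j - 1) * (2 * (j : ℝ)) * esymm n (n - 2 * j) lam := by
  classical
  open Complex Polynomial Finset in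
  -- notation
  set P : ℝ := ∏ j, Real.sqrt (1 + lam j ^ 2) with hP
  set T : ℝ := ∑ i, 1 / (1 + lam i ^ 2) with hT
  set S : ℝ := ∑ i, lam i / (1 + lam i ^ 2) with hS
  have hpos : ∀ i, (0:ℝ) < 1 + lam i ^ 2 := fun i => by positivity
  set c : Fin n → ℂ := fun i => 1 + (lam i : ℂ) * Complex.I with hc
  have hcne : ∀ i, c i ≠ 0 := by
    intro i h
    have := congrArg Complex.re h
    simp [hc] at this
  set F : ℂ := ∏ i, c i with hFdef
  -- F = P * I^(n-2)
  have hfac : ∀ i, c i = (Real.sqrt (1 + lam i ^ 2) : ℝ) *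
      Complex.exp (Real.arctan (lam i) * Complex.I) := by
    intro i
    have h0 : Real.sqrt (1 + lam i ^2) ≠ 0 := by positivity
    have h1 : ((Real.sqrt (1 + lam i ^2) : ℝ) : ℂ) ≠ 0 := by exact_mod_cast h0
    rw [hc]
    simp only
    rw [Complex.exp_mul_I, ← Complex.ofReal_cos, ← Complex.ofReal_sin,
      Real.cos_arctan, Real.sin_arctan]
    push_cast
    field_simp
  have hF : F = (P : ℂ) * Complex.I ^ (n - 2) := by
    rw [hFdef]
    calc ∏ i, c i
        = ∏ i, ((Real.sqrt (1 + lam i ^ 2) : ℝ) : ℂ) *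
            Complex.exp (Real.arctan (lam i) * Complex.I) := by
          exact Finset.prod_congr rfl fun i _ => hfac i
      _ = (P : ℂ) * Complex.exp ((∑ i, Real.arctan (lam i) : ℝ) * Complex.I) := by
          rw [Finset.prod_mul_distrib, ← Complex.exp_sum, hP]
          push_cast
          rw [Finset.sum_mul]
      _ = (P : ℂ) * Complex.I ^ (n - 2) := by
          rw [hsum]
          congr 1
          have hcast : ((n:ℝ) - 2) = ((n - 2 : ℕ) : ℝ) := by
            push_cast [Nat.cast_sub hn]; ring
          rw [hcast]
          rw [show ((((n-2:ℕ):ℝ) * Real.pi / 2 : ℝ) : ℂ) * Complex.I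
              = ((n-2:ℕ):ℂ) * (((Real.pi/2 : ℝ):ℂ) * Complex.I) by push_cast; ring]
          rw [Complex.exp_nat_mul]
          congr 1
          rw [Complex.exp_mul_I]
          simp
  -- the polynomial
  set q : Polynomial ℂ := ∏ i, (X + C ((lam i : ℂ) * Complex.I)) with hq
  have hq1 : q.eval 1 = F := by
    rw [hq, hFdef, Polynomial.eval_prod]
    refine Finset.prod_congr rfl fun i _ => ?_
    simp [hc, add_comm]
  -- Vieta
  have hesymm : ∀ k, (Finset.univ.val.map (fun i => (lam i : ℂ) * Complex.I)).esymm k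
      = Complex.I ^ k * (esymm n k lam : ℝ) := by
    intro k
    rw [Finset.esymm_map_val, esymm]
    push_cast
    rw [Finset.mul_sum]
    refine Finset.sum_congr rfl fun t ht => ?_
    rw [Finset.prod_mul_distrib, Finset.prod_const,
      (Finset.mem_powersetCard.mp ht).2, mul_comm]
  have hqsum : q = ∑ k ∈ Finset.range (n+1),
      C (Complex.I ^ k * (esymm n k lam : ℝ)) * X ^ (n - k) := by
    rw [hq, Finset.prod_eq_multiset_prod]
    have := Multiset.prod_X_add_C_eq_sum_esymm
      (Finset.univ.val.map (fun i => (lam i : ℂ) * Complex.I))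
    rw [Multiset.map_map] at this
    simp only [Function.comp] at this
    rw [this]
    have hcard : Multiset.card (Finset.univ.val.map (fun i => (lam i : ℂ) * Complex.I)) = n := by
      simp
    rw [hcard]
    exact Finset.sum_congr rfl fun k _ => by rw [hesymm]
  -- derivative at 1, two ways
  have hd0 : Polynomial.derivative q
      = ∑ i, ∏ j ∈ Finset.univ.erase i, (X + C ((lam j : ℂ) * Complex.I)) := by
    rw [hq, Finset.prod_eq_multiset_prod, Polynomial.derivative_prod]
    simp only [Polynomial.derivative_add, Polynomial.derivative_X, Polynomial.derivative_C,
      add_zero, mul_one]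
    show Finset.sum _ _ = _
    refine Finset.sum_congr rfl fun i _ => ?_
    rw [← Finset.erase_val, ← Finset.prod_eq_multiset_prod]
  have hd1 : (Polynomial.derivative q).eval 1
      = ∑ i, ∏ j ∈ Finset.univ.erase i, c j := by
    rw [hd0, Polynomial.eval_finset_sum]
    refine Finset.sum_congr rfl fun i _ => ?_
    rw [Polynomial.eval_prod]
    refine Finset.prod_congr rfl fun j _ => ?_
    simp [hc, add_comm]
  have hd2 : (Polynomial.derivative q).eval 1
      = ∑ k ∈ Finset.range (n+1),
          Complex.I ^ k * (esymm n k lam : ℝ) * ((n - k : ℕ) : ℂ) := by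
    rw [hqsum, Polynomial.derivative_sum, Polynomial.eval_finset_sum]
    refine Finset.sum_congr rfl fun k _ => ?_
    rw [Polynomial.derivative_C_mul, Polynomial.derivative_X_pow]
    simp [mul_comm, mul_assoc]
  -- erase product = F * (c i)⁻¹
  have herase : ∀ i, ∏ j ∈ Finset.univ.erase i, c j = F * (c i)⁻¹ := by
    intro i
    rw [hFdef, ← Finset.mul_prod_erase Finset.univ c (Finset.mem_univ i),
      mul_comm (c i), mul_assoc, mul_inv_cancel₀ (hcne i), mul_one]
  have hinv : ∀ i, (c i)⁻¹ = ((1 / (1 + lam i ^ 2) : ℝ) : ℂ)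
      - ((lam i / (1 + lam i ^ 2) : ℝ) : ℂ) * Complex.I := by
    intro i
    have hne2 : ((1:ℂ) + (lam i:ℂ)^2) ≠ 0 := by
      intro h
      have h2 := congrArg Complex.re h
      push_cast at h2
      simp [Complex.add_re, Complex.one_re, ← Complex.ofReal_pow] at h2
      nlinarith [sq_nonneg (lam i), hpos i]
    apply inv_eq_of_mul_eq_one_right
    rw [hc]
    simp only
    push_cast
    field_simp
    linear_combination (-(lam i : ℂ)^2) * Complex.I_sq
  -- the main complex identity
  have hmain : (P : ℂ) * Complex.I ^ (n-2) * ((T : ℝ) - (S : ℝ) * Complex.I)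
      = ∑ k ∈ Finset.range (n+1),
          Complex.I ^ k * (esymm n k lam : ℝ) * ((n - k : ℕ) : ℂ) := by
    rw [← hd2, hd1]
    symm
    calc ∑ i, ∏ j ∈ Finset.univ.erase i, c j
        = ∑ i, F * (c i)⁻¹ := Finset.sum_congr rfl fun i _ => herase i
      _ = F * ∑ i, (c i)⁻¹ := by rw [Finset.mul_sum]
      _ = (P : ℂ) * Complex.I ^ (n-2) * ((T : ℝ) - (S : ℝ) * Complex.I) := by
          rw [← hF]
          congr 1
          calc ∑ i, (c i)⁻¹
              = ∑ i, (((1 / (1 + lam i ^ 2) : ℝ) : ℂ)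
                - ((lam i / (1 + lam i ^ 2) : ℝ) : ℂ) * Complex.I) :=
                Finset.sum_congr rfl fun i _ => hinv i
            _ = ((T : ℝ) : ℂ) - ((S : ℝ) : ℂ) * Complex.I := by
                rw [Finset.sum_sub_distrib, ← Finset.sum_mul, hT, hS]
                push_cast
                ring
  have hone : Complex.I ^ (n-2) * (-Complex.I) ^ (n-2) = 1 := by
    rw [← mul_pow, mul_neg, Complex.I_mul_I, neg_neg, one_pow]
  have hL : (-Complex.I)^(n-2) * ((P : ℂ) * Complex.I ^ (n-2) * ((T : ℝ) - (S : ℝ) * Complex.I))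
      = (P : ℂ) * ((T : ℝ) - (S : ℝ) * Complex.I) := by
    linear_combination ((P:ℂ) * (((T:ℝ):ℂ) - ((S:ℝ):ℂ) * Complex.I)) * hone
  have hre : P * T = (((-Complex.I))^(n-2) * ∑ k ∈ Finset.range (n+1),
      Complex.I ^ k * (esymm n k lam : ℝ) * ((n - k : ℕ) : ℂ)).re := by
    rw [← hmain, hL]
    simp [Complex.sub_re, Complex.mul_re]
  have hre2 : (((-Complex.I))^(n-2) * ∑ k ∈ Finset.range (n+1),
      Complex.I ^ k * (esymm n k lam : ℝ) * ((n - k : ℕ) : ℂ)).re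
      = ∑ k ∈ Finset.range (n+1),
        ((-Complex.I)^(n-2) * Complex.I^k).re * (((n-k : ℕ):ℝ) * esymm n k lam) := by
    rw [Finset.mul_sum, Complex.re_sum]
    refine Finset.sum_congr rfl fun k _ => ?_
    rw [show (-Complex.I)^(n-2) * (Complex.I ^ k * ((esymm n k lam : ℝ):ℂ) * ((n - k : ℕ) : ℂ))
        = ((((n-k:ℕ):ℝ) * esymm n k lam : ℝ) : ℂ) * ((-Complex.I)^(n-2) * Complex.I^k) by
      push_cast; ring, Complex.re_ofReal_mul, mul_comm]
  calc ∑ i, (1 / (1 + lam i ^ 2)) * ∏ j, Real.sqrt (1 + lam j ^ 2)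
      = T * P := by rw [hT, Finset.sum_mul]
    _ = P * T := mul_comm T P
    _ = ∑ k ∈ Finset.range (n+1),
        ((-Complex.I)^(n-2) * Complex.I^k).re * (((n-k : ℕ):ℝ) * esymm n k lam) := by
        rw [hre, hre2]
    _ = _ := key_sum n hn (fun k => esymm n k lam)
end

section
/- Let n ≥ 3 and let λ_1 ≥ λ_2 ≥ ⋯ ≥ λ_n be real numbers satisfying ∑_{j=1}^n arctan λ_j ≥ (n−2)π/2. Then for every k with 1 ≤ k ≤ n−1 and every index i, 0 ≤ σ_{k−1}(λ̂_i) ≤ (n−k+1) σ_{k−1}(λ_1,…,λ_n), where σ_{k−1}(λ̂_i) denotes the (k−1)-th elementary symmetric polynomial of the n−1 numbers obtained from (λ_1,…,λ_n) by deleting λ_i (note σ_{k−1}(λ̂_i) = ∂σ_k/∂λ_i). -/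
open Real

section Aux

set_option linter.unusedSectionVars false


variable {ι : Type*} [DecidableEq ι]

/-- Elementary symmetric polynomial over a finset. -/
noncomputable def Esym (s : Finset ι) (m : ℕ) (f : ι → ℝ) : ℝ :=
  ∑ t ∈ s.powersetCard m, ∏ j ∈ t, f j

lemma Esym_zero (s : Finset ι) (f : ι → ℝ) : Esym s 0 f = 1 := by
  simp [Esym, Finset.powersetCard_zero]

lemma Esym_self (s : Finset ι) (f : ι → ℝ) : Esym s s.card f = ∏ j ∈ s, f j := by
  simp [Esym, Finset.powersetCard_self]

lemma Esym_nonneg (s : Finset ι) (m : ℕ) (f : ι → ℝ) (h : ∀ j ∈ s, 0 ≤ f j) :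
    0 ≤ Esym s m f := by
  apply Finset.sum_nonneg
  intro t ht
  obtain ⟨hts, -⟩ := Finset.mem_powersetCard.mp ht
  exact Finset.prod_nonneg fun j hj => h j (hts hj)

lemma Esym_erase (s : Finset ι) (f : ι → ℝ) {i : ι} (hi : i ∈ s) (m : ℕ) :
    Esym s (m + 1) f = Esym (s.erase i) (m + 1) f + f i * Esym (s.erase i) m f := by
  conv_lhs => rw [Esym, ← Finset.insert_erase hi,
    Finset.powersetCard_succ_insert (Finset.notMem_erase i s)]
  rw [Finset.sum_union, Finset.sum_image]
  · congr 1
    rw [Esym, Finset.mul_sum]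
    refine Finset.sum_congr rfl fun t ht => ?_
    obtain ⟨hts, -⟩ := Finset.mem_powersetCard.mp ht
    rw [Finset.prod_insert (fun hc => (Finset.notMem_erase i s) (hts hc))]
  · intro a ha b hb hab
    obtain ⟨has, -⟩ := Finset.mem_powersetCard.mp ha
    obtain ⟨hbs, -⟩ := Finset.mem_powersetCard.mp hb
    have hia : i ∉ a := fun hc => (Finset.notMem_erase i s) (has hc)
    have hib : i ∉ b := fun hc => (Finset.notMem_erase i s) (hbs hc)
    rw [← Finset.erase_insert hia, ← Finset.erase_insert hib, hab]
  · rw [Finset.disjoint_left]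
    intro t ht htim
    obtain ⟨hts, -⟩ := Finset.mem_powersetCard.mp ht
    obtain ⟨u, hu, rfl⟩ := Finset.mem_image.mp htim
    exact (Finset.notMem_erase i s) (hts (Finset.mem_insert_self i u))

lemma sum_Esym_erase (s : Finset ι) (f : ι → ℝ) (m : ℕ) :
    ∑ i ∈ s, Esym (s.erase i) m f = ((s.card - m : ℕ) : ℝ) * Esym s m f := by
  have h1 : ∀ i ∈ s, Esym (s.erase i) m f
      = ∑ t ∈ (s.powersetCard m).filter (fun t => i ∉ t), ∏ j ∈ t, f j := by
    intro i hi
    rw [Esym]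
    congr 1
    ext t
    simp only [Finset.mem_powersetCard, Finset.mem_filter, Finset.subset_erase]
    tauto
  rw [Finset.sum_congr rfl h1]
  simp only [Finset.sum_filter]
  rw [Finset.sum_comm, Esym, Finset.mul_sum]
  refine Finset.sum_congr rfl fun t ht => ?_
  obtain ⟨hts, htc⟩ := Finset.mem_powersetCard.mp ht
  rw [← Finset.sum_filter]
  rw [Finset.sum_const]
  have : s.filter (fun i => i ∉ t) = s \ t := by
    ext x; simp [Finset.mem_sdiff]
  rw [this, Finset.card_sdiff_of_subset hts, htc, nsmul_eq_mul]

lemma arctan_add_le {a b : ℝ} (ha : 0 ≤ a) (hb : 0 ≤ b) :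
    arctan (a + b) ≤ arctan a + arctan b := by
  rcases lt_or_ge (a * b) 1 with h | h
  · rw [Real.arctan_add h]
    apply Real.arctan_strictMono.monotone
    have h1 : 0 < 1 - a * b := by linarith
    rw [le_div_iff₀ h1]
    nlinarith [mul_nonneg (mul_nonneg ha hb) (add_nonneg ha hb)]
  · have hb' : 0 < b := by nlinarith
    have hba : b⁻¹ ≤ a := by
      rw [inv_le_iff_one_le_mul₀ hb']
      nlinarith
    have h2 := Real.arctan_strictMono.monotone hba
    rw [Real.arctan_inv_of_pos hb'] at h2
    have := Real.arctan_lt_pi_div_two (a + b)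
    linarith

lemma arctan_sum_le (s : Finset ι) (f : ι → ℝ) (h : ∀ i ∈ s, 0 ≤ f i) :
    arctan (∑ i ∈ s, f i) ≤ ∑ i ∈ s, arctan (f i) := by
  induction s using Finset.cons_induction with
  | empty => simp
  | cons a s ha ih =>
    rw [Finset.sum_cons, Finset.sum_cons]
    have h1 : 0 ≤ f a := h a (Finset.mem_cons_self a s)
    have h2 : ∀ i ∈ s, 0 ≤ f i := fun i hi => h i (Finset.mem_cons.mpr (Or.inr hi))
    have h3 : 0 ≤ ∑ i ∈ s, f i := Finset.sum_nonneg h2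
    have := arctan_add_le h1 h3
    have := ih h2
    linarith

lemma Esym_nonneg_main {ι : Type*} [DecidableEq ι] :
    ∀ (N : ℕ) (s : Finset ι) (f : ι → ℝ), s.card = N →
      ((N : ℝ) - 2) * π / 2 ≤ ∑ j ∈ s, arctan (f j) →
      ∀ m, m ≤ N - 1 → 0 ≤ Esym s m f := by
  intro N
  induction N with
  | zero =>
    intro s f hc hsum m hm
    interval_cases m
    rw [Esym_zero]; norm_num
  | succ N ih =>
    intro s f hc hsum m hm
    rcases Nat.eq_zero_or_pos m with rfl | hm1
    · rw [Esym_zero]; norm_num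
    have hmN : m ≤ N := by omega
    -- sum over an erased set still satisfies the (card - 1) hypothesis
    have herase_sum : ∀ i ∈ s, ((N : ℝ) - 2) * π / 2 ≤ ∑ j ∈ s.erase i, arctan (f j) := by
      intro i hi
      have h1 : ∑ j ∈ s.erase i, arctan (f j) + arctan (f i) = ∑ j ∈ s, arctan (f j) :=
        Finset.sum_erase_add s _ hi
      have h2 := Real.arctan_lt_pi_div_two (f i)
      have hcast : ((N : ℝ) + 1 - 2) * π / 2 ≤ ∑ j ∈ s, arctan (f j) := by
        push_cast at hsum; linarith
      linarith
    rcases Nat.lt_or_ge m N with hlt | hge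
    · -- m ≤ N - 1 : use the averaging identity and induction
      have key : ∀ i ∈ s, 0 ≤ Esym (s.erase i) m f := by
        intro i hi
        exact ih (s.erase i) f (by rw [Finset.card_erase_of_mem hi, hc]; omega)
          (herase_sum i hi) m (by omega)
      have hsumnn : 0 ≤ ∑ i ∈ s, Esym (s.erase i) m f := Finset.sum_nonneg key
      rw [sum_Esym_erase] at hsumnn
      have hcpos : (0 : ℝ) < ((s.card - m : ℕ) : ℝ) := by
        have : 0 < s.card - m := by omega
        exact_mod_cast this
      nlinarith
    · -- top case: m = N
      have hmeq : m = N := le_antisymm hmN hge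
      subst hmeq
      by_cases hall : ∀ j ∈ s, 0 ≤ f j
      · exact Esym_nonneg s m f hall
      push_neg at hall
      obtain ⟨p, hp, hfp⟩ := hall
      set t := s.erase p with ht
      have htc : t.card = m := by rw [ht, Finset.card_erase_of_mem hp, hc]; omega
      -- every other entry is positive
      have hpos : ∀ j ∈ t, 0 < f j := by
        intro j hj
        have hjs : j ∈ s := Finset.mem_of_mem_erase hj
        have hjp : j ≠ p := Finset.ne_of_mem_erase hj
        -- bound the sum over s minus {p, j}
        have h1 : ∑ l ∈ t.erase j, arctan (f l) + arctan (f j) = ∑ l ∈ t, arctan (f l) :=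
          Finset.sum_erase_add t _ hj
        have h2 : ∑ l ∈ t, arctan (f l) + arctan (f p) = ∑ l ∈ s, arctan (f l) :=
          Finset.sum_erase_add s _ hp
        have h3 : ∑ l ∈ t.erase j, arctan (f l) ≤ ((t.erase j).card : ℝ) * (π / 2) := by
          calc ∑ l ∈ t.erase j, arctan (f l) ≤ ∑ l ∈ t.erase j, π / 2 :=
              Finset.sum_le_sum fun l _ => (Real.arctan_lt_pi_div_two (f l)).le
            _ = ((t.erase j).card : ℝ) * (π / 2) := by rw [Finset.sum_const, nsmul_eq_mul]
        have h4 : ((t.erase j).card : ℝ) = (m : ℝ) - 1 := by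
          rw [Finset.card_erase_of_mem hj, htc, Nat.cast_sub hm1, Nat.cast_one]
        have hcast : ((m : ℝ) + 1 - 2) * π / 2 ≤ ∑ l ∈ s, arctan (f l) := by
          push_cast at hsum; linarith
        have h5 : 0 ≤ arctan (f j) + arctan (f p) := by
          rw [h4] at h3; linarith
        have h6 : arctan (-f p) ≤ arctan (f j) := by
          rw [Real.arctan_neg]; linarith
        have h7 : -f p ≤ f j := Real.arctan_strictMono.le_iff_le.mp h6
        linarith
      have htne : t.Nonempty := Finset.card_pos.mp (by omega)
      have hPpos : 0 < ∏ j ∈ t, f j := Finset.prod_pos hpos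
      set P := ∏ j ∈ t, f j with hP
      set S := ∑ i ∈ t, (f i)⁻¹ with hS
      have hSpos : 0 < S := Finset.sum_pos (fun i hi => inv_pos.mpr (hpos i hi)) htne
      -- decompose: Esym s m f = P + f p * Esym t (m-1) f
      obtain ⟨M, rfl⟩ : ∃ M, m = M + 1 := ⟨m - 1, by omega⟩
      have hdec : Esym s (M + 1) f = P + f p * Esym t M f := by
        rw [Esym_erase s f hp M, ← ht, ← htc, Esym_self, hP]
      -- Esym t M f = P * S
      have hEtM : Esym t M f = P * S := by
        have hid := sum_Esym_erase t f M
        have hcoef : ((t.card - M : ℕ) : ℝ) = 1 := by rw [htc]; norm_num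
        rw [hcoef, one_mul] at hid
        rw [← hid, hS, Finset.mul_sum]
        refine Finset.sum_congr rfl fun i hi => ?_
        have hcardei : (t.erase i).card = M := by rw [Finset.card_erase_of_mem hi, htc]; omega
        rw [← hcardei, Esym_self, hP, ← Finset.mul_prod_erase t f hi]
        field_simp [(hpos i hi).ne']
      -- the arctan estimate : (-f p) * S ≤ 1
      set a := -f p with ha
      have hapos : 0 < a := by simp [ha]; linarith
      have harct : arctan a + arctan S ≤ π / 2 := by
        have h1 : ∀ i ∈ t, arctan (f i)⁻¹ = π / 2 - arctan (f i) := fun i hi =>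
          Real.arctan_inv_of_pos (hpos i hi)
        have h2 : ∑ i ∈ t, arctan (f i)⁻¹ = (t.card : ℝ) * (π / 2) - ∑ i ∈ t, arctan (f i) := by
          rw [Finset.sum_congr rfl h1, Finset.sum_sub_distrib, Finset.sum_const, nsmul_eq_mul]
        have h3 : ∑ l ∈ t, arctan (f l) + arctan (f p) = ∑ l ∈ s, arctan (f l) :=
          Finset.sum_erase_add s _ hp
        have h4 : arctan (f p) = -arctan a := by rw [ha, Real.arctan_neg, neg_neg]
        have h5 : arctan S ≤ ∑ i ∈ t, arctan (f i)⁻¹ :=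
          arctan_sum_le t _ (fun i hi => (inv_pos.mpr (hpos i hi)).le)
        have hcast : ((M : ℝ) + 1 + 1 - 2) * π / 2 ≤ ∑ l ∈ s, arctan (f l) := by
          push_cast at hsum; linarith
        have htcast : (t.card : ℝ) = (M : ℝ) + 1 := by rw [htc]; push_cast; ring
        rw [htcast] at h2
        linarith
      have haS : a * S ≤ 1 := by
        have h1 : arctan a ≤ arctan S⁻¹ := by
          rw [Real.arctan_inv_of_pos hSpos]; linarith
        have h2 : a ≤ S⁻¹ := Real.arctan_strictMono.le_iff_le.mp h1
        calc a * S ≤ S⁻¹ * S := mul_le_mul_of_nonneg_right h2 hSpos.le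
          _ = 1 := inv_mul_cancel₀ hSpos.ne'
      rw [hdec, hEtM]
      have : f p * (P * S) = -(a * (P * S)) := by rw [ha]; ring
      rw [this]
      nlinarith

lemma esymmDel_eq (n m : ℕ) (lam : Fin n → ℝ) (i : Fin n) :
    esymmDel n m lam i = Esym ((Finset.univ : Finset (Fin n)).erase i) m lam := rfl

lemma esymm_eq (n m : ℕ) (lam : Fin n → ℝ) :
    esymm n m lam = Esym (Finset.univ : Finset (Fin n)) m lam := rfl

end Aux

/-- For ordered reals `λ_1 ≥ ⋯ ≥ λ_n` with `∑ arctan λ_j ≥ (n-2)π/2`, `n ≥ 3`, for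
every `1 ≤ k ≤ n-1` and every `i`: `0 ≤ σ_{k-1}(λ̂_i) ≤ (n-k+1) σ_{k-1}(λ)`. -/
theorem sigma_partial_bounds
    (n : ℕ) (hn : 3 ≤ n) (lam : Fin n → ℝ)
    (hsort : ∀ i j : Fin n, i ≤ j → lam j ≤ lam i)
    (hsum : ((n : ℝ) - 2) * Real.pi / 2 ≤ ∑ j, Real.arctan (lam j)) :
    ∀ k : ℕ, 1 ≤ k → k ≤ n - 1 → ∀ i : Fin n,
      0 ≤ esymmDel n (k - 1) lam i ∧
        esymmDel n (k - 1) lam i ≤ ((n - k + 1 : ℕ) : ℝ) * esymm n (k - 1) lam := by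
  intro k hk1 hk2 i
  set m := k - 1 with hmdef
  have hcard : (Finset.univ : Finset (Fin n)).card = n := by
    rw [Finset.card_univ, Fintype.card_fin]
  -- every deleted esymm is nonnegative
  have hdel : ∀ j : Fin n, 0 ≤ esymmDel n m lam j := by
    intro j
    rw [esymmDel_eq]
    apply Esym_nonneg_main (n - 1) _ lam
    · rw [Finset.card_erase_of_mem (Finset.mem_univ j), hcard]
    · have h1 : ∑ l ∈ (Finset.univ : Finset (Fin n)).erase j, arctan (lam l)
          + arctan (lam j) = ∑ l, arctan (lam l) :=
        Finset.sum_erase_add _ _ (Finset.mem_univ j)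
      have h2 := Real.arctan_lt_pi_div_two (lam j)
      have h3 : ((n - 1 : ℕ) : ℝ) = (n : ℝ) - 1 := by
        rw [Nat.cast_sub (by omega), Nat.cast_one]
      rw [h3]
      have hpi := Real.pi_pos
      linarith
    · omega
  refine ⟨hdel i, ?_⟩
  -- averaging identity
  have hid := sum_Esym_erase (Finset.univ : Finset (Fin n)) lam m
  rw [hcard] at hid
  have h1 : esymmDel n m lam i ≤ ∑ j : Fin n, esymmDel n m lam j :=
    Finset.single_le_sum (fun j _ => hdel j) (Finset.mem_univ i)
  have h2 : ∑ j : Fin n, esymmDel n m lam j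
      = ((n - m : ℕ) : ℝ) * esymm n m lam := by
    rw [esymm_eq]
    rw [← hid]
    exact Finset.sum_congr rfl fun j _ => esymmDel_eq n m lam j
  have h3 : (n - m : ℕ) = n - k + 1 := by omega
  rw [h2, h3] at h1
  exact h1
end

section
/- For all integers n ≥ 2 and m with 1 ≤ m ≤ n−1, one has 1 − 4/(√(4n+1) + 1) ≤ 2 − m/n − √( (1 − m/n)² + 4/n ) ≤ (n−2)/n. -/
open Real

/-- Elementary inequality comparing the Jacobi constants: for integers `n ≥ 2` and
`1 ≤ m ≤ n-1`, `1 - 4/(√(4n+1)+1) ≤ 2 - m/n - √((1-m/n)² + 4/n) ≤ (n-2)/n`. -/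
theorem jacobi_constant_inequality
    (n m : ℕ) (hn : 2 ≤ n) (hm1 : 1 ≤ m) (hmn : m ≤ n - 1) :
    1 - 4 / (Real.sqrt (4 * (n : ℝ) + 1) + 1) ≤
        2 - (m : ℝ) / n - Real.sqrt ((1 - (m : ℝ) / n) ^ 2 + 4 / n) ∧
      2 - (m : ℝ) / n - Real.sqrt ((1 - (m : ℝ) / n) ^ 2 + 4 / n) ≤ ((n : ℝ) - 2) / n := by
  have hN : (2 : ℝ) ≤ (n : ℝ) := by exact_mod_cast hn
  have hN0 : (0 : ℝ) < (n : ℝ) := by linarith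
  have hNe : (n : ℝ) ≠ 0 := ne_of_gt hN0
  have hm1' : (1 : ℝ) ≤ (m : ℝ) := by exact_mod_cast hm1
  have hmn' : (m : ℝ) + 1 ≤ (n : ℝ) := by exact_mod_cast (by omega : m + 1 ≤ n)
  set x : ℝ := 1 - (m : ℝ) / n with hxdef
  have hx1 : 1 / (n : ℝ) ≤ x := by
    rw [hxdef, le_sub_iff_add_le, ← add_div, div_le_one hN0]; linarith
  have hxn : 1 ≤ x * n := (div_le_iff₀ hN0).mp hx1
  have hxn2 : x * n ≤ (n : ℝ) - 1 := by
    have h1 : x * n = (n : ℝ) - m := by rw [hxdef]; field_simp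
    linarith
  have hx0 : 0 < x := lt_of_lt_of_le (by positivity) hx1
  set s : ℝ := Real.sqrt (4 * (n : ℝ) + 1) with hsdef
  have hs2 : s ^ 2 = 4 * (n : ℝ) + 1 := Real.sq_sqrt (by linarith)
  have hs3 : 3 ≤ s := by
    have h9 : (3 : ℝ) = Real.sqrt 9 := by
      rw [show (9 : ℝ) = 3 ^ 2 by norm_num, Real.sqrt_sq (by norm_num)]
    rw [h9, hsdef]
    exact Real.sqrt_le_sqrt (by linarith)
  have hsn : 0 ≤ (s - 1) / (n : ℝ) := div_nonneg (by linarith) hN0.le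
  have h2n : (0 : ℝ) < 2 / (n : ℝ) := by positivity
  have hn2 : (0 : ℝ) < (n : ℝ) ^ 2 := by positivity
  have hsqrtle : Real.sqrt (x ^ 2 + 4 / n) ≤ x + (s - 1) / n := by
    have key2 : (x ^ 2 + 4 / n) * n ^ 2 ≤ (x + (s - 1) / n) ^ 2 * n ^ 2 := by
      have e1 : (x ^ 2 + 4 / n) * n ^ 2 = x ^ 2 * n ^ 2 + 4 * n := by
        field_simp; try ring
      have e2 : (x + (s - 1) / n) ^ 2 * n ^ 2 = (x * n + (s - 1)) ^ 2 := by
        field_simp; try ring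
      rw [e1, e2]
      nlinarith [mul_nonneg (show (0:ℝ) ≤ s - 1 by linarith)
        (show (0:ℝ) ≤ x * n - 1 by linarith)]
    have key : x ^ 2 + 4 / n ≤ (x + (s - 1) / n) ^ 2 :=
      le_of_mul_le_mul_right key2 hn2
    calc Real.sqrt (x ^ 2 + 4 / n) ≤ Real.sqrt ((x + (s - 1) / n) ^ 2) :=
          Real.sqrt_le_sqrt key
      _ = x + (s - 1) / n := Real.sqrt_sq (add_nonneg hx0.le hsn)
  have hsqrtge : x + 2 / n ≤ Real.sqrt (x ^ 2 + 4 / n) := by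
    have key2 : (x + 2 / n) ^ 2 * n ^ 2 ≤ (x ^ 2 + 4 / n) * n ^ 2 := by
      have e1 : (x ^ 2 + 4 / n) * n ^ 2 = x ^ 2 * n ^ 2 + 4 * n := by
        field_simp; try ring
      have e2 : (x + 2 / n) ^ 2 * n ^ 2 = (x * n + 2) ^ 2 := by
        field_simp; try ring
      rw [e1, e2]
      nlinarith [hxn2]
    have key : (x + 2 / n) ^ 2 ≤ x ^ 2 + 4 / n :=
      le_of_mul_le_mul_right key2 hn2
    calc x + 2 / n = Real.sqrt ((x + 2 / n) ^ 2) := (Real.sqrt_sq (add_nonneg hx0.le h2n.le)).symm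
      _ ≤ Real.sqrt (x ^ 2 + 4 / n) := Real.sqrt_le_sqrt key
  constructor
  · have hkey : 4 / (s + 1) = (s - 1) / n := by
      have hs1 : s + 1 ≠ 0 := by positivity
      rw [div_eq_div_iff hs1 hNe]
      linear_combination -hs2
    rw [hkey]
    have h1 : 2 - (m : ℝ) / n = 1 + x := by rw [hxdef]; ring
    rw [h1]
    linarith [hsqrtle]
  · have h2 : ((n : ℝ) - 2) / n = 1 - 2 / n := by field_simp
    have h1 : 2 - (m : ℝ) / n = 1 + x := by rw [hxdef]; ring
    rw [h1, h2]
    linarith [hsqrtge]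
end
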